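/- Let ρ = (1/2)(I + r₁σ₁ + r₂σ₂ + r₃σ₃) be a single-qubit density matrix, where σ₁, σ₂, σ₃ are the Pauli matrices and r₁² + r₂² + r₃² ≤ 1. Then the modified trace distance measure of coherence of ρ equals √(r₁² + r₂²), i.e., the infimum over all λ ≥ 0 and all 2×2 diagonal density matrices δ of ‖ρ − λδ‖_tr equals √(r₁² + r₂²). -/

import Mathlib

open Matrix
open scoped ComplexOrder

/-- The trace norm of a matrix `A`: `‖A‖_tr = Tr √(AᴴA)`. -/
noncomputable def traceNorm {d : ℕ} (A : Matrix (Fin d) (Fin d) ℂ) : ℝ :=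
  (((Matrix.isHermitian_conjTranspose_mul_self A).eigenvectorUnitary : Matrix (Fin d) (Fin d) ℂ) *
    Matrix.diagonal ((fun x : ℝ => ((Real.sqrt x : ℝ) : ℂ)) ∘
      (Matrix.isHermitian_conjTranspose_mul_self A).eigenvalues) *
    (star (Matrix.isHermitian_conjTranspose_mul_self A).eigenvectorUnitary :
      Matrix (Fin d) (Fin d) ℂ)).trace.re


/-- The Pauli matrices. -/
noncomputable def σ1 : Matrix (Fin 2) (Fin 2) ℂ := !![0, 1; 1, 0]
noncomputable def σ2 : Matrix (Fin 2) (Fin 2) ℂ := !![0, -Complex.I; Complex.I, 0]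
noncomputable def σ3 : Matrix (Fin 2) (Fin 2) ℂ := !![1, 0; 0, -1]

lemma diag_nonneg₂ {A : Matrix (Fin 2) (Fin 2) ℂ} (hA : A.PosSemidef) (i : Fin 2) :
    0 ≤ (A i i).re ∧ (A i i).im = 0 := by
  have h := Complex.le_def.mp (hA.diag_nonneg (i := i))
  exact ⟨by simpa using h.1, by simpa using h.2.symm⟩

lemma traceNorm_fin_two (A : Matrix (Fin 2) (Fin 2) ℂ) :
    0 ≤ traceNorm A ∧
      traceNorm A ^ 2 = ((Aᴴ * A).trace).re + 2 * ‖A.det‖ := by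
  have hS := Matrix.posSemidef_conjTranspose_mul_self A
  set U : Matrix (Fin 2) (Fin 2) ℂ :=
    ↑(Matrix.isHermitian_conjTranspose_mul_self A).eigenvectorUnitary with hU
  set D : Matrix (Fin 2) (Fin 2) ℂ := Matrix.diagonal ((fun x : ℝ => ((Real.sqrt x : ℝ) : ℂ)) ∘
      (Matrix.isHermitian_conjTranspose_mul_self A).eigenvalues) with hD
  set B := U * D * star U with hBdef
  have hB : B.PosSemidef := by
    have hDp : D.PosSemidef :=
      posSemidef_diagonal_iff.mpr fun i => by simp [Complex.zero_le_real, Real.sqrt_nonneg]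
    rw [hBdef, Matrix.star_eq_conjTranspose]; exact hDp.mul_mul_conjTranspose_same U
  have hB2 : B * B = Aᴴ * A := by
    have hsp := (Matrix.isHermitian_conjTranspose_mul_self A).spectral_theorem
    have hUU : star U * U = 1 := Unitary.coe_star_mul_self _
    have hDD : D * D = diagonal (RCLike.ofReal ∘
        (Matrix.isHermitian_conjTranspose_mul_self A).eigenvalues) := by
      rw [hD, diagonal_mul_diagonal]; congr 1; funext i
      simp only [Function.comp]
      rw [← Complex.ofReal_mul, Real.mul_self_sqrt (hS.eigenvalues_nonneg i)]; rfl
    calc B * B = U * (D * (star U * U) * D) * star U := by simp only [hBdef, Matrix.mul_assoc]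
      _ = Aᴴ * A := by
        rw [hUU, Matrix.mul_one, hDD]
        exact hsp.symm
  have h0 := diag_nonneg₂ hB 0
  have h1 := diag_nonneg₂ hB 1
  have htN : traceNorm A = (B 0 0).re + (B 1 1).re := by
    rw [show traceNorm A = B.trace.re from rfl, Matrix.trace_fin_two]; simp
  have ht0 : 0 ≤ traceNorm A := by rw [htN]; linarith [h0.1, h1.1]
  have htr : B.trace = ((traceNorm A : ℝ) : ℂ) := by
    rw [Matrix.trace_fin_two, htN]
    apply Complex.ext <;> simp [h0.2, h1.2]
  have hle := Complex.le_def.mp hB.det_nonneg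
  simp only [Complex.zero_re, Complex.zero_im] at hle
  obtain ⟨r, hr⟩ : ∃ r : ℝ, B.det = (r : ℂ) :=
    ⟨B.det.re, by apply Complex.ext <;> simp [hle.2.symm]⟩
  have hr0 : 0 ≤ r := by
    have := hle.1; rw [hr, Complex.ofReal_re] at this; exact this
  have hdS : B.det * B.det = ((‖A.det‖ ^ 2 : ℝ) : ℂ) := by
    have h := congrArg Matrix.det hB2
    rw [Matrix.det_mul B B, Matrix.det_mul Aᴴ A, Matrix.det_conjTranspose] at h
    rw [h, Complex.star_def, mul_comm, Complex.mul_conj, Complex.sq_norm]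
  have hdetB' : B.det = ((‖A.det‖ : ℝ) : ℂ) := by
    rw [hr] at hdS ⊢
    have h1' : ((r ^ 2 : ℝ) : ℂ) = ((‖A.det‖ ^ 2 : ℝ) : ℂ) := by
      push_cast at hdS ⊢
      linear_combination hdS
    have h1'' : r ^ 2 = ‖A.det‖ ^ 2 :=
      Complex.ofReal_inj.mp h1'
    have h2 : r = ‖A.det‖ := by
      nlinarith [norm_nonneg A.det]
    rw [h2]
  have hcay : (B * B).trace = B.trace ^ 2 - 2 * B.det := by
    simp [Matrix.trace_fin_two, Matrix.det_fin_two, Matrix.mul_apply, Fin.sum_univ_two]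
    ring
  refine ⟨ht0, ?_⟩
  have key : (Aᴴ * A).trace = ((traceNorm A ^ 2 - 2 * ‖A.det‖ : ℝ) : ℂ) := by
    rw [← hB2, hcay, htr, hdetB']; push_cast; ring
  have hre := congrArg Complex.re key
  rw [Complex.ofReal_re] at hre
  rw [hre]; ring

lemma bloch_entries (r₁ r₂ x y : ℝ) :
    let A : Matrix (Fin 2) (Fin 2) ℂ :=
      !![(x : ℂ), (↑r₁ - ↑r₂ * Complex.I) / 2; (↑r₁ + ↑r₂ * Complex.I) / 2, (y : ℂ)]
    (Aᴴ * A).trace = ((x ^ 2 + y ^ 2 + (r₁ ^ 2 + r₂ ^ 2) / 2 : ℝ) : ℂ) ∧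
      A.det = ((x * y - (r₁ ^ 2 + r₂ ^ 2) / 4 : ℝ) : ℂ) := by
  intro A
  constructor
  · show (Aᴴ * A).trace = _
    simp [A, Matrix.trace_fin_two, Matrix.mul_apply, Fin.sum_univ_two,
      Matrix.conjTranspose_apply, Complex.star_def, _root_.map_ofNat]
    linear_combination (- (r₂:ℂ)^2 / 2) * Complex.I_sq
  · show A.det = _
    simp [A, Matrix.det_fin_two]
    linear_combination (- (r₂:ℂ)^2 / 4) * Complex.I_sq

lemma traceNorm_bloch (r₁ r₂ x y : ℝ) :
    0 ≤ traceNorm !![(x : ℂ), (↑r₁ - ↑r₂ * Complex.I) / 2;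
        (↑r₁ + ↑r₂ * Complex.I) / 2, (y : ℂ)] ∧
      traceNorm !![(x : ℂ), (↑r₁ - ↑r₂ * Complex.I) / 2;
          (↑r₁ + ↑r₂ * Complex.I) / 2, (y : ℂ)] ^ 2 =
        x ^ 2 + y ^ 2 + (r₁ ^ 2 + r₂ ^ 2) / 2 + 2 * |x * y - (r₁ ^ 2 + r₂ ^ 2) / 4| := by
  obtain ⟨htr, hdet⟩ := bloch_entries r₁ r₂ x y
  obtain ⟨h0, h2⟩ := traceNorm_fin_two
    !![(x : ℂ), (↑r₁ - ↑r₂ * Complex.I) / 2; (↑r₁ + ↑r₂ * Complex.I) / 2, (y : ℂ)]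
  refine ⟨h0, ?_⟩
  rw [h2, htr, hdet, Complex.ofReal_re, Complex.norm_real, Real.norm_eq_abs]

/-- For a single-qubit state with Bloch vector `(r₁, r₂, r₃)`, the modified trace
distance measure of coherence equals `√(r₁² + r₂²)`. -/
theorem modified_trace_coherence_qubit (r₁ r₂ r₃ : ℝ)
    (hr : r₁ ^ 2 + r₂ ^ 2 + r₃ ^ 2 ≤ 1)
    (ρ : Matrix (Fin 2) (Fin 2) ℂ)
    (hρ : ρ = ((1 : ℝ) / 2) • (1 + r₁ • σ1 + r₂ • σ2 + r₃ • σ3)) :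
    sInf {x : ℝ | ∃ (l : ℝ) (δ : Matrix (Fin 2) (Fin 2) ℂ),
        0 ≤ l ∧ δ.PosSemidef ∧ δ.trace = 1 ∧ δ.IsDiag ∧
        x = traceNorm (ρ - l • δ)} = Real.sqrt (r₁ ^ 2 + r₂ ^ 2) := by
  have hq : 0 ≤ r₁ ^ 2 + r₂ ^ 2 := by positivity
  -- lower bound for all bloch-type matrices
  have hlow : ∀ x y : ℝ, Real.sqrt (r₁ ^ 2 + r₂ ^ 2) ≤
      traceNorm !![(x : ℂ), (↑r₁ - ↑r₂ * Complex.I) / 2;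
        (↑r₁ + ↑r₂ * Complex.I) / 2, (y : ℂ)] := by
    intro x y
    obtain ⟨h0, h2⟩ := traceNorm_bloch r₁ r₂ x y
    have habs : (r₁ ^ 2 + r₂ ^ 2) / 4 - x * y ≤ |x * y - (r₁ ^ 2 + r₂ ^ 2) / 4| := by
      rw [abs_sub_comm]; exact le_abs_self _
    have hsq : r₁ ^ 2 + r₂ ^ 2 ≤
        traceNorm !![(x : ℂ), (↑r₁ - ↑r₂ * Complex.I) / 2;
          (↑r₁ + ↑r₂ * Complex.I) / 2, (y : ℂ)] ^ 2 := by
      rw [h2]; nlinarith [sq_nonneg (x - y)]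
    calc Real.sqrt (r₁ ^ 2 + r₂ ^ 2) ≤ Real.sqrt (traceNorm _ ^ 2) := Real.sqrt_le_sqrt hsq
    _ = _ := Real.sqrt_sq h0
  -- value for the zero-diagonal matrix
  have hval : traceNorm !![(0 : ℂ), (↑r₁ - ↑r₂ * Complex.I) / 2;
      (↑r₁ + ↑r₂ * Complex.I) / 2, (0 : ℂ)] = Real.sqrt (r₁ ^ 2 + r₂ ^ 2) := by
    obtain ⟨h0, h2⟩ := traceNorm_bloch r₁ r₂ 0 0
    rw [show ((0:ℝ):ℂ) = (0:ℂ) from rfl] at h0 h2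
    rw [← Real.sqrt_sq h0, h2]
    norm_num [abs_of_nonneg (by positivity : (0:ℝ) ≤ (r₁ ^ 2 + r₂ ^ 2) / 4)]
    ring_nf
  -- bounds on r₃
  have hr₃ : r₃ ^ 2 ≤ 1 := by nlinarith
  have h1p : 0 ≤ (1 + r₃) / 2 := by nlinarith
  have h1m : 0 ≤ (1 - r₃) / 2 := by nlinarith
  -- the witness incoherent state
  set δ₀ : Matrix (Fin 2) (Fin 2) ℂ :=
    Matrix.diagonal ![(((1 + r₃) / 2 : ℝ) : ℂ), (((1 - r₃) / 2 : ℝ) : ℂ)] with hδ₀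
  have hδpsd : δ₀.PosSemidef := by
    refine Matrix.posSemidef_diagonal_iff.mpr fun i => ?_
    fin_cases i
    · simpa using Complex.zero_le_real.mpr h1p
    · simpa using Complex.zero_le_real.mpr h1m
  have hδtr : δ₀.trace = 1 := by
    simp [hδ₀, Matrix.trace_diagonal, Fin.sum_univ_two]
    push_cast
    ring
  have hδdiag : δ₀.IsDiag := Matrix.isDiag_diagonal _
  have hwit : ρ - (1 : ℝ) • δ₀ = !![(0 : ℂ), (↑r₁ - ↑r₂ * Complex.I) / 2;
      (↑r₁ + ↑r₂ * Complex.I) / 2, (0 : ℂ)] := by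
    subst hρ
    ext i j
    fin_cases i <;> fin_cases j <;>
      simp [σ1, σ2, σ3, hδ₀, Matrix.diagonal, Matrix.one_apply] <;> push_cast <;> ring
  have hmem : Real.sqrt (r₁ ^ 2 + r₂ ^ 2) ∈ {x : ℝ | ∃ (l : ℝ) (δ : Matrix (Fin 2) (Fin 2) ℂ),
      0 ≤ l ∧ δ.PosSemidef ∧ δ.trace = 1 ∧ δ.IsDiag ∧
      x = traceNorm (ρ - l • δ)} :=
    ⟨1, δ₀, zero_le_one, hδpsd, hδtr, hδdiag, by rw [hwit, hval]⟩
  have hlb : ∀ x ∈ {x : ℝ | ∃ (l : ℝ) (δ : Matrix (Fin 2) (Fin 2) ℂ),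
      0 ≤ l ∧ δ.PosSemidef ∧ δ.trace = 1 ∧ δ.IsDiag ∧
      x = traceNorm (ρ - l • δ)}, Real.sqrt (r₁ ^ 2 + r₂ ^ 2) ≤ x := by
    rintro x ⟨l, δ, hl, hpsd, htrδ, hdiag, rfl⟩
    obtain ⟨ha0, ha1⟩ := diag_nonneg₂ hpsd 0
    obtain ⟨hc0, hc1⟩ := diag_nonneg₂ hpsd 1
    set a := (δ 0 0).re with haa
    set c := (δ 1 1).re with hcc
    have hδ00 : δ 0 0 = (a : ℂ) := by apply Complex.ext <;> simp [haa, ha1]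
    have hδ11 : δ 1 1 = (c : ℂ) := by apply Complex.ext <;> simp [hcc, hc1]
    have hδ01 : δ 0 1 = 0 := hdiag (by decide)
    have hδ10 : δ 1 0 = 0 := hdiag (by decide)
    have hA : ρ - l • δ = !![(((1 + r₃) / 2 - l * a : ℝ) : ℂ),
        (↑r₁ - ↑r₂ * Complex.I) / 2; (↑r₁ + ↑r₂ * Complex.I) / 2,
        (((1 - r₃) / 2 - l * c : ℝ) : ℂ)] := by
      subst hρ
      ext i j
      fin_cases i <;> fin_cases j <;>
        simp [σ1, σ2, σ3, Matrix.one_apply, hδ01, hδ10, hδ00, hδ11] <;>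
        push_cast <;> ring
    rw [hA]
    exact hlow _ _
  exact le_antisymm
    (csInf_le ⟨Real.sqrt (r₁ ^ 2 + r₂ ^ 2), hlb⟩ hmem)
    (le_csInf ⟨_, hmem⟩ hlb)
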